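/- arXiv:2303.08855 — 7 statements merged into one kernel-verified Lean document; each statement's English description precedes it below -/
import Mathlib

section
/- Let p be a positive integer, m an integer with 0 ≤ m ≤ p, and a ∈ [0,1). Then the equation (1 − a − a²)r^{p+m} + r^p + a·r^m − 1 = 0 has exactly one root r_{p,m}(a) in the open interval (0,1). -/
theorem stmt_1 (p m : ℕ) (hp : 1 ≤ p) (hm : m ≤ p) (a : ℝ) (ha : a ∈ Set.Ico (0:ℝ) 1) :
    ∃! r : ℝ, r ∈ Set.Ioo (0:ℝ) 1 ∧
      (1 - a - a ^ 2) * r ^ (p + m) + r ^ p + a * r ^ m - 1 = 0 := by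
  obtain ⟨ha0, ha1⟩ := ha
  set f : ℝ → ℝ := fun r => (1 - a - a ^ 2) * r ^ (p + m) + r ^ p + a * r ^ m - 1 with hf
  have hcont : Continuous f := by fun_prop
  have hmono : StrictMonoOn f (Set.Icc 0 1) := by
    apply strictMonoOn_of_deriv_pos (convex_Icc 0 1) hcont.continuousOn
    intro x hx
    rw [interior_Icc] at hx
    obtain ⟨hx0, hx1⟩ := hx
    have hder : HasDerivAt f
        ((1 - a - a ^ 2) * (↑(p + m) * x ^ (p + m - 1)) + ↑p * x ^ (p - 1)
          + a * (↑m * x ^ (m - 1))) x := by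
      have h1 := (hasDerivAt_pow (p + m) x).const_mul (1 - a - a ^ 2)
      have h2 := hasDerivAt_pow p x
      have h3 := (hasDerivAt_pow m x).const_mul a
      exact ((h1.add h2).add h3).sub_const 1
    rw [hder.deriv]
    have hle1 : x ^ (p + m - 1) ≤ x ^ (p - 1) :=
      pow_le_pow_of_le_one hx0.le hx1.le (by omega)
    have hle2 : x ^ (p + m - 1) ≤ x ^ (m - 1) :=
      pow_le_pow_of_le_one hx0.le hx1.le (by omega)
    have hpr : (0:ℝ) < (p:ℝ) := by exact_mod_cast hp
    have hmr : (0:ℝ) ≤ (m:ℝ) := by positivity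
    have hP : (0:ℝ) < (p:ℝ) * x ^ (p - 1) := mul_pos hpr (pow_pos hx0 _)
    have hpmr : (0:ℝ) < ((p + m : ℕ):ℝ) := by
      have : 0 < p + m := by omega
      exact_mod_cast this
    have hPM : (0:ℝ) < ((p + m : ℕ):ℝ) * x ^ (p + m - 1) :=
      mul_pos hpmr (pow_pos hx0 _)
    have hkey : (a + a ^ 2 - 1) * (((p + m : ℕ):ℝ) * x ^ (p + m - 1)) <
        a * (((p + m : ℕ):ℝ) * x ^ (p + m - 1)) := by
      apply mul_lt_mul_of_pos_right _ hPM
      nlinarith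
    have hD : a * (((p + m : ℕ):ℝ) * x ^ (p + m - 1)) =
        a * ((p:ℝ) * x ^ (p + m - 1)) + a * ((m:ℝ) * x ^ (p + m - 1)) := by
      push_cast; ring
    have hA : a * ((p:ℝ) * x ^ (p + m - 1)) ≤ a * ((p:ℝ) * x ^ (p - 1)) :=
      mul_le_mul_of_nonneg_left (mul_le_mul_of_nonneg_left hle1 hpr.le) ha0
    have hB : a * ((m:ℝ) * x ^ (p + m - 1)) ≤ a * ((m:ℝ) * x ^ (m - 1)) :=
      mul_le_mul_of_nonneg_left (mul_le_mul_of_nonneg_left hle2 hmr) ha0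
    have hC : a * ((p:ℝ) * x ^ (p - 1)) ≤ 1 * ((p:ℝ) * x ^ (p - 1)) :=
      mul_le_mul_of_nonneg_right ha1.le hP.le
    have hrw : (1 - a - a ^ 2) * (((p + m : ℕ):ℝ) * x ^ (p + m - 1)) =
        -((a + a ^ 2 - 1) * (((p + m : ℕ):ℝ) * x ^ (p + m - 1))) := by ring
    rw [hrw]
    linarith
  have hf0 : f 0 < 0 := by
    have h0pm : (0:ℝ) ^ (p + m) = 0 := zero_pow (by omega)
    have h0p : (0:ℝ) ^ p = 0 := zero_pow (by omega)
    have h0m : (0:ℝ) ^ m ≤ 1 := by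
      rcases Nat.eq_zero_or_pos m with h | h
      · simp [h]
      · rw [zero_pow (by omega)]; norm_num
    have h0m' : (0:ℝ) ≤ (0:ℝ) ^ m := by positivity
    have : a * (0:ℝ) ^ m ≤ a * 1 := mul_le_mul_of_nonneg_left h0m ha0
    simp only [hf, h0pm, h0p]
    nlinarith
  have hf1 : 0 < f 1 := by
    simp only [hf, one_pow]
    nlinarith
  have h0mem : (0:ℝ) ∈ f '' Set.Ioo 0 1 :=
    intermediate_value_Ioo (by norm_num) hcont.continuousOn ⟨hf0, hf1⟩
  obtain ⟨r, hr, hfr⟩ := h0mem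
  refine ⟨r, ⟨hr, hfr⟩, ?_⟩
  rintro s ⟨hs, hfs⟩
  exact hmono.injOn (Set.Ioo_subset_Icc_self hs) (Set.Ioo_subset_Icc_self hr)
    (hfs.trans hfr.symm)
end

section
/- Let p ≥ 1, 0 ≤ m ≤ p, and a ∈ [0,1). The unique root r_{p,m}(a) ∈ (0,1) of (1 − a − a²)r^{p+m} + r^p + a·r^m − 1 = 0 satisfies r_{p,m}(a) ≥ (1/(2+a))^{1/p}. -/
theorem stmt_2 (p m : ℕ) (hp : 1 ≤ p) (hm : m ≤ p) (a : ℝ) (ha : a ∈ Set.Ico (0:ℝ) 1)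
    (r : ℝ) (hr : r ∈ Set.Ioo (0:ℝ) 1)
    (hroot : (1 - a - a ^ 2) * r ^ (p + m) + r ^ p + a * r ^ m - 1 = 0) :
    (1 / (2 + a)) ^ ((1:ℝ) / p) ≤ r := by
  obtain ⟨hr0, hr1⟩ := hr
  obtain ⟨ha0, ha1⟩ := ha
  have hy : 0 < r ^ m := pow_pos hr0 m
  have hxp : 0 < r ^ p := pow_pos hr0 p
  have hy1 : r ^ m ≤ 1 := pow_le_one₀ hr0.le hr1.le
  have hx1 : r ^ p < 1 := pow_lt_one₀ hr0.le hr1 (by omega)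
  have hpa : r ^ (p + m) = r ^ p * r ^ m := pow_add r p m
  have heq : r ^ m * (a + (1 - a - a ^ 2) * r ^ p) = 1 - r ^ p := by
    linear_combination hroot - (1 - a - a ^ 2) * hpa
  have hD : 0 < a + (1 - a - a ^ 2) * r ^ p := by
    by_contra h
    push_neg at h
    nlinarith [mul_nonneg hy.le (neg_nonneg.2 h)]
  have h2 : 0 ≤ (1 - r ^ m) * (a + (1 - a - a ^ 2) * r ^ p) :=
    mul_nonneg (by linarith) hD.le
  have key : 1 ≤ (2 + a) * r ^ p := by
    nlinarith [h2, heq, mul_pos (sub_pos.2 ha1) hxp]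
  have h2a : (0:ℝ) < 2 + a := by linarith
  have hle : 1 / (2 + a) ≤ r ^ p := by
    rw [div_le_iff₀ h2a] at *
    linarith
  have hp0 : (p:ℝ) ≠ 0 := by positivity
  calc (1 / (2 + a)) ^ ((1:ℝ) / p)
      ≤ (r ^ p) ^ ((1:ℝ) / p) :=
        Real.rpow_le_rpow (by positivity) hle (by positivity)
    _ = r := by
        rw [← Real.rpow_natCast r p, ← Real.rpow_mul hr0.le,
          mul_one_div, div_self hp0, Real.rpow_one]
end

section
/- Let a ∈ [0,1), N ≥ 1 an integer, and r ∈ [0,1). If 2r^N + r − 1 ≤ 0, then a + (1 − a²)·r^N/(1 − r) ≤ 1. -/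
theorem stmt_3 (a : ℝ) (ha : a ∈ Set.Ico (0:ℝ) 1) (N : ℕ) (hN : 1 ≤ N)
    (r : ℝ) (hr : r ∈ Set.Ico (0:ℝ) 1)
    (h : 2 * r ^ N + r - 1 ≤ 0) :
    a + (1 - a ^ 2) * r ^ N / (1 - r) ≤ 1 := by
  obtain ⟨ha0, ha1⟩ := ha
  obtain ⟨hr0, hr1⟩ := hr
  have h1r : (0:ℝ) < 1 - r := by linarith
  have hrN : 0 ≤ r ^ N := pow_nonneg hr0 N
  have key : (1 - a ^ 2) * r ^ N / (1 - r) ≤ 1 - a := by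
    rw [div_le_iff₀ h1r]
    nlinarith [sq_nonneg (1 - a), mul_nonneg hrN (sub_nonneg.2 ha1.le)]
  linarith
end

section
/- Let a ∈ [0,1), m ≥ 1, and N an integer with m + 1 ≤ N ≤ 2m, and r ∈ (0,1). If 4r^N + r^{2+2m−N} − 2r^{1+2m−N} + r^{2m−N} + 4r − 4 ≤ 0, then a·r^m + (1 − a²)·r^N/(1 − r) ≤ 1. -/
theorem stmt_5 (a : ℝ) (ha : a ∈ Set.Ico (0:ℝ) 1) (m N : ℕ) (hm : 1 ≤ m)
    (hN1 : m + 1 ≤ N) (hN2 : N ≤ 2 * m) (r : ℝ) (hr : r ∈ Set.Ioo (0:ℝ) 1)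
    (h : 4 * r ^ N + r ^ (2 + 2 * m - N) - 2 * r ^ (1 + 2 * m - N)
        + r ^ (2 * m - N) + 4 * r - 4 ≤ 0) :
    a * r ^ m + (1 - a ^ 2) * r ^ N / (1 - r) ≤ 1 := by
  obtain ⟨ha0, ha1⟩ := ha
  obtain ⟨hr0, hr1⟩ := hr
  have h1r : (0:ℝ) < 1 - r := by linarith
  have e1 : r ^ (2 + 2 * m - N) = r ^ (2 * m - N) * r ^ 2 := by
    rw [← pow_add]; congr 1; omega
  have e2 : r ^ (1 + 2 * m - N) = r ^ (2 * m - N) * r := by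
    rw [← pow_succ]; congr 1; omega
  have e3 : r ^ N * r ^ (2 * m - N) = (r ^ m) ^ 2 := by
    rw [← pow_add, ← pow_mul]; congr 1; omega
  have hN : (0:ℝ) < r ^ N := pow_pos hr0 N
  have hk : (0:ℝ) ≤ r ^ (2 * m - N) := pow_nonneg hr0.le _
  rw [e1, e2] at h
  have key : a * r ^ m * (1 - r) + (1 - a ^ 2) * r ^ N ≤ 1 - r := by
    have hsq := sq_nonneg (2 * a * r ^ N - r ^ m * (1 - r))
    have hmul := mul_le_mul_of_nonneg_left h hN.le
    nlinarith [sq_nonneg (1 - a), mul_pos hN hN, e3]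
  have hgoal : a * r ^ m + (1 - a ^ 2) * r ^ N / (1 - r)
      = (a * r ^ m * (1 - r) + (1 - a ^ 2) * r ^ N) / (1 - r) := by
    field_simp
  rw [hgoal, div_le_one h1r]
  linarith [key]
end

section
/- Let a ∈ [0,1) and r ∈ (0,1) with a·r < 1. Then the series identity holds: a·r^m + (1 − a²)·∑_{s=1}^∞ a^{s−1}·r^{sk+m} + ((r^{−m}/(1+a)) + r^{k−m}/(1 − r^k))·(1 − a²)²·∑_{s=1}^∞ a^{2s−2}·r^{2sk+2m} = r^m·(a + (1 − a²)·r^k/(1 − r^k)), for all integers k ≥ 1 and m ≥ 0. -/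
theorem stmt_7 (a : ℝ) (ha : a ∈ Set.Ico (0:ℝ) 1) (r : ℝ) (hr : r ∈ Set.Ioo (0:ℝ) 1)
    (har : a * r < 1) (k m : ℕ) (hk : 1 ≤ k) :
    a * r ^ m + (1 - a ^ 2) * ∑' s : ℕ, a ^ s * r ^ ((s + 1) * k + m) +
      (r ^ (-(m : ℤ)) / (1 + a) + r ^ ((k : ℤ) - (m : ℤ)) / (1 - r ^ k)) *
        ((1 - a ^ 2) ^ 2 * ∑' s : ℕ, a ^ (2 * s) * r ^ (2 * (s + 1) * k + 2 * m)) =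
      r ^ m * (a + (1 - a ^ 2) * r ^ k / (1 - r ^ k)) := by
  obtain ⟨ha0, ha1⟩ := ha
  obtain ⟨hr0, hr1⟩ := hr
  have hrk1 : r ^ k < 1 := pow_lt_one₀ hr0.le hr1 (by omega)
  have hrk0 : 0 < r ^ k := pow_pos hr0 k
  have hrkr : r ^ k ≤ r := by
    simpa using pow_le_pow_of_le_one hr0.le hr1.le hk
  have hark : a * r ^ k < 1 :=
    lt_of_le_of_lt (mul_le_mul_of_nonneg_left hrkr ha0) har
  have hark0 : 0 ≤ a * r ^ k := mul_nonneg ha0 hrk0.le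
  have h1 : (∑' s : ℕ, a ^ s * r ^ ((s + 1) * k + m))
      = r ^ (k + m) / (1 - a * r ^ k) := by
    have : ∀ s : ℕ, a ^ s * r ^ ((s + 1) * k + m) = (a * r ^ k) ^ s * r ^ (k + m) := by
      intro s
      rw [show (s + 1) * k + m = s * k + (k + m) by ring, pow_add, mul_pow, ← pow_mul]
      ring
    rw [tsum_congr this, tsum_mul_right, tsum_geometric_of_lt_one hark0 hark]
    rw [div_eq_mul_inv, mul_comm]
  have hark2 : (a * r ^ k) ^ 2 < 1 := by
    nlinarith
  have hark20 : 0 ≤ (a * r ^ k) ^ 2 := sq_nonneg _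
  have h2 : (∑' s : ℕ, a ^ (2 * s) * r ^ (2 * (s + 1) * k + 2 * m))
      = r ^ (2 * k + 2 * m) / (1 - (a * r ^ k) ^ 2) := by
    have : ∀ s : ℕ, a ^ (2 * s) * r ^ (2 * (s + 1) * k + 2 * m)
        = ((a * r ^ k) ^ 2) ^ s * r ^ (2 * k + 2 * m) := by
      intro s
      calc a ^ (2 * s) * r ^ (2 * (s + 1) * k + 2 * m)
          = (a * r ^ k) ^ (2 * s) * r ^ (2 * k + 2 * m) := by
            rw [mul_pow, ← pow_mul, mul_assoc (a ^ (2 * s)), ← pow_add]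
            congr 1
            ring
        _ = ((a * r ^ k) ^ 2) ^ s * r ^ (2 * k + 2 * m) := by rw [← pow_mul]
    rw [tsum_congr this, tsum_mul_right, tsum_geometric_of_lt_one hark20 hark2]
    rw [div_eq_mul_inv, mul_comm]
  rw [h1, h2]
  have hzm : (r : ℝ) ^ (-(m : ℤ)) = (r ^ m)⁻¹ := by
    rw [zpow_neg, zpow_natCast]
  have hzkm : (r : ℝ) ^ ((k : ℤ) - (m : ℤ)) = r ^ k / r ^ m := by
    rw [zpow_sub₀ (ne_of_gt hr0), zpow_natCast, zpow_natCast]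
  rw [hzm, hzkm, pow_add, pow_add]
  have hrm : (0:ℝ) < r ^ m := pow_pos hr0 m
  have h1a : (0:ℝ) < 1 + a := by linarith
  have hne1 : (1:ℝ) - r ^ k ≠ 0 := by linarith
  have hne2 : (1:ℝ) - a * r ^ k ≠ 0 := by linarith
  have hne3 : (1:ℝ) - (a * r ^ k) ^ 2 ≠ 0 := by nlinarith
  have hne4 : (1:ℝ) + a * r ^ k ≠ 0 := by nlinarith
  rw [show (1:ℝ) - (a * r ^ k) ^ 2 = (1 - a * r ^ k) * (1 + a * r ^ k) by ring]
  field_simp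
  ring
end

section
/- Let b ∈ [0,1) and r ∈ (0,1). Then b·r + (1 − b²)·r²/(1 − r) ≤ 1 whenever r ≤ 3/5. -/
theorem stmt_10 (b : ℝ) (hb : b ∈ Set.Ico (0:ℝ) 1) (r : ℝ) (hr : r ∈ Set.Ioo (0:ℝ) 1)
    (h : r ≤ 3 / 5) :
    b * r + (1 - b ^ 2) * r ^ 2 / (1 - r) ≤ 1 := by
  obtain ⟨hb0, hb1⟩ := hb
  obtain ⟨hr0, hr1⟩ := hr
  have h1 : (0:ℝ) < 1 - r := by linarith
  have h4 : (0:ℝ) < 4 * r ^ 2 := by positivity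
  have hf : 0 ≤ (4 * r ^ 2) * ((1 - b * r) * (1 - r) - (1 - b ^ 2) * r ^ 2) := by
    have hid : (4 * r ^ 2) * ((1 - b * r) * (1 - r) - (1 - b ^ 2) * r ^ 2)
        = (2 * b * r ^ 2 + r ^ 2 - r) ^ 2 + r ^ 2 * ((3 - 5 * r) * (1 + r)) := by ring
    rw [hid]
    have : 0 ≤ r ^ 2 * ((3 - 5 * r) * (1 + r)) := by
      apply mul_nonneg (sq_nonneg r)
      apply mul_nonneg <;> linarith
    nlinarith [sq_nonneg (2 * b * r ^ 2 + r ^ 2 - r)]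
  have key : (1 - b ^ 2) * r ^ 2 / (1 - r) ≤ 1 - b * r := by
    rw [div_le_iff₀ h1]
    nlinarith [mul_pos hr0 hr0]
  linarith
end

section
/- Let k ≥ 1 and 0 ≤ m ≤ k. The equation −6r^{k−m} + r^{2(k−m)} + 8r^{2k} + 1 = 0 has at least one root in (0,1); moreover when k = 1, m = 0 the maximal root in (0,1) is r = 1/3 (since −6r + r² + 8r² + 1 = 9r² − 6r + 1 = (3r−1)²). -/
theorem stmt_17 (k m : ℕ) (hk : 1 ≤ k) (hm : m ≤ k) :
    (∃ r : ℝ, r ∈ Set.Ioo (0:ℝ) 1 ∧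
      -6 * r ^ (k - m) + r ^ (2 * (k - m)) + 8 * r ^ (2 * k) + 1 = 0) ∧
    IsGreatest {r : ℝ | r ∈ Set.Ioo (0:ℝ) 1 ∧
      -6 * r + r ^ 2 + 8 * r ^ 2 + 1 = 0} (1 / 3) := by
  constructor
  · set a := k - m with ha
    set f : ℝ → ℝ := fun r => -6 * r ^ a + r ^ (2 * a) + 8 * r ^ (2 * k) + 1 with hf
    have hcont : Continuous f := by fun_prop
    have hf1 : f 1 = 4 := by simp [hf]; ring
    rcases Nat.eq_zero_or_pos a with h0 | hpos
    · have hf0 : f 0 = -4 := by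
        simp [hf, h0, zero_pow (by omega : 2 * k ≠ 0)]; norm_num
      have hsub := intermediate_value_Icc (by norm_num : (0:ℝ) ≤ 1) hcont.continuousOn
      have hmem : (0:ℝ) ∈ f '' Set.Icc 0 1 := hsub (by rw [hf0, hf1]; norm_num)
      obtain ⟨c, hc, hfc⟩ := hmem
      refine ⟨c, ⟨?_, ?_⟩, hfc⟩
      · rcases lt_or_eq_of_le hc.1 with h | h
        · exact h
        · rw [← h] at hfc; rw [hf0] at hfc; norm_num at hfc
      · rcases lt_or_eq_of_le hc.2 with h | h
        · exact h
        · rw [h] at hfc; rw [hf1] at hfc; norm_num at hfc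
    · set r0 : ℝ := (1/3 : ℝ) ^ ((a : ℝ)⁻¹) with hr0
      have hr0pos : 0 < r0 := Real.rpow_pos_of_pos (by norm_num) _
      have hr0lt1 : r0 < 1 := Real.rpow_lt_one (by norm_num) (by norm_num)
        (by positivity)
      have hr0a : r0 ^ a = 1/3 :=
        Real.rpow_inv_natCast_pow (by norm_num) (by omega)
      have hak : a ≤ k := by omega
      have hle : r0 ^ (2 * k) ≤ r0 ^ (2 * a) :=
        pow_le_pow_of_le_one hr0pos.le hr0lt1.le (by omega)
      have h2a : r0 ^ (2 * a) = 1/9 := by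
        rw [two_mul, pow_add, hr0a]; norm_num
      have hfr0 : f r0 ≤ 0 := by
        simp only [hf, hr0a, h2a]
        nlinarith [hle, h2a]
      have hsub := intermediate_value_Icc hr0lt1.le hcont.continuousOn
      have hmem : (0:ℝ) ∈ f '' Set.Icc r0 1 := hsub (by rw [hf1]; exact ⟨hfr0, by norm_num⟩)
      obtain ⟨c, hc, hfc⟩ := hmem
      refine ⟨c, ⟨lt_of_lt_of_le hr0pos hc.1, ?_⟩, hfc⟩
      rcases lt_or_eq_of_le hc.2 with h | h
      · exact h
      · rw [h] at hfc; rw [hf1] at hfc; norm_num at hfc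
  · constructor
    · refine ⟨⟨by norm_num, by norm_num⟩, by norm_num⟩
    · rintro r ⟨⟨_, _⟩, hr⟩
      nlinarith [sq_nonneg (3 * r - 1)]
end
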